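/- Let F : 𝓗 → [0,1] be defined by F(g) = max{1 − d̃_𝓗(Id, g), 0} and set d_𝓗(g,h) = sup_{f ∈ 𝓗} |F(gf) − F(hf)|. Then d_𝓗 is a right-invariant metric on 𝓗 which is topologically equivalent to d̃_𝓗 (the two metrics induce the same topology on 𝓗). -/

import Mathlib

/-- A homothetic transformation `v ↦ λ • v + t` of `ℝⁿ`, recorded by its scale
factor `λ > 0` and translation part `t`. -/
structure Homothety (n : ℕ) where
  scale : ℝ
  trans : EuclideanSpace ℝ (Fin n)
  scale_pos : 0 < scale

namespace Homothety

variable {n : ℕ}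

theorem ext' {a b : Homothety n} (h1 : a.scale = b.scale) (h2 : a.trans = b.trans) :
    a = b := by
  cases a; cases b; simp_all

/-- Composition of homotheties: `(λ, t) * (μ, s) = (λμ, λ • s + t)`. -/
noncomputable instance : Mul (Homothety n) :=
  ⟨fun a b => ⟨a.scale * b.scale, a.scale • b.trans + a.trans,
    mul_pos a.scale_pos b.scale_pos⟩⟩

/-- The identity homothety `(1, 0)`. -/
instance : One (Homothety n) := ⟨⟨1, 0, one_pos⟩⟩

/-- The inverse homothety `(λ, t)⁻¹ = (λ⁻¹, −λ⁻¹ • t)`. -/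
noncomputable instance : Inv (Homothety n) := ⟨fun a => ⟨a.scale⁻¹, -(a.scale⁻¹ • a.trans),
  inv_pos.mpr a.scale_pos⟩⟩

@[simp] theorem mul_scale (a b : Homothety n) : (a * b).scale = a.scale * b.scale := rfl
@[simp] theorem mul_trans (a b : Homothety n) :
    (a * b).trans = a.scale • b.trans + a.trans := rfl
@[simp] theorem one_scale : (1 : Homothety n).scale = 1 := rfl
@[simp] theorem one_trans : (1 : Homothety n).trans = 0 := rfl
@[simp] theorem inv_scale (a : Homothety n) : a⁻¹.scale = a.scale⁻¹ := rfl
@[simp] theorem inv_trans (a : Homothety n) : a⁻¹.trans = -(a.scale⁻¹ • a.trans) := rfl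

/-- The group `𝓗` of homothetic transformations of `ℝⁿ` under composition. -/
noncomputable instance : Group (Homothety n) where
  mul_assoc a b c := ext' (mul_assoc _ _ _) (by simp [mul_smul, smul_add, add_assoc])
  one_mul a := ext' (one_mul _) (by simp)
  mul_one a := ext' (mul_one _) (by simp)
  inv_mul_cancel a := ext' (inv_mul_cancel₀ a.scale_pos.ne')
    (by simp [smul_smul, inv_mul_cancel₀ a.scale_pos.ne'])

/-- The standard action of a homothety on `ℝⁿ`: `g • v = λ • v + t`. -/
noncomputable def act (g : Homothety n) (v : EuclideanSpace ℝ (Fin n)) :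
    EuclideanSpace ℝ (Fin n) :=
  g.scale • v + g.trans

/-- The distance `d̃_𝓗(g, h) = max {|ln(λ/μ)|, ‖t − s‖}` on `𝓗`. -/
noncomputable def tdist (g h : Homothety n) : ℝ :=
  max |Real.log (g.scale / h.scale)| ‖g.trans - h.trans‖

end Homothety

namespace Homothety

/-- The auxiliary function `F(g) = max {1 − d̃_𝓗(Id, g), 0}`. -/
noncomputable def auxF (g : Homothety n) : ℝ :=
  max (1 - tdist 1 g) 0

/-- The distance `d_𝓗(g, h) = sup_{f ∈ 𝓗} |F(gf) − F(hf)|`. -/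
noncomputable def rdist (g h : Homothety n) : ℝ :=
  sSup (Set.range fun f : Homothety n => |auxF (g * f) - auxF (h * f)|)

end Homothety


namespace Homothety

variable {n : ℕ}

noncomputable instance : Nonempty (Homothety n) := ⟨1⟩

theorem tdist_nonneg' (g h : Homothety n) : 0 ≤ tdist g h :=
  le_trans (abs_nonneg _) (le_max_left _ _)

theorem auxF_nonneg (g : Homothety n) : 0 ≤ auxF g := le_max_right _ _

theorem auxF_le_one (g : Homothety n) : auxF g ≤ 1 :=
  max_le (by linarith [tdist_nonneg' (1 : Homothety n) g]) zero_le_one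

theorem tdist_one' (k : Homothety n) : tdist 1 k = max |Real.log k.scale| ‖k.trans‖ := by
  simp [tdist, one_div, Real.log_inv, abs_neg]

theorem auxF_one' : auxF (1 : Homothety n) = 1 := by
  simp [auxF, tdist_one']

theorem bddA (g h : Homothety n) :
    BddAbove (Set.range fun f : Homothety n => |auxF (g * f) - auxF (h * f)|) := by
  refine ⟨2, ?_⟩
  rintro x ⟨f, rfl⟩
  have h1 := auxF_nonneg (g * f); have h2 := auxF_le_one (g * f)
  have h3 := auxF_nonneg (h * f); have h4 := auxF_le_one (h * f)
  rw [abs_le]; constructor <;> linarith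

theorem aux_lip (x y : ℝ) : |max (1 - x) 0 - max (1 - y) 0| ≤ |x - y| := by
  refine (abs_max_sub_max_le_max _ _ _ _).trans ?_
  have h1 : (1 - x) - (1 - y) = y - x := by ring
  rw [h1, sub_self, abs_zero, abs_sub_comm y x]
  exact max_le le_rfl (abs_nonneg _)

theorem auxF_mul (g f : Homothety n) :
    auxF (g * f) =
      max (1 - max |Real.log (g.scale * f.scale)| ‖g.scale • f.trans + g.trans‖) 0 := by
  simp [auxF, tdist_one']

end Homothety

namespace Homothety

variable {n : ℕ}

theorem key_core (g h f : Homothety n) {δ : ℝ} (hδ1 : δ ≤ 1) (hd : tdist g h ≤ δ)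
    (ha : 0 < g.scale) (hb : 0 < h.scale)
    (hb3 : h.scale ≤ 3 * g.scale) (ha3 : g.scale ≤ 3 * h.scale)
    (habs : |g.scale - h.scale| ≤ 6 * g.scale * δ)
    (hlog : |Real.log (g.scale / h.scale)| ≤ δ)
    (htr : ‖g.trans - h.trans‖ ≤ δ) (hδ0 : 0 ≤ δ)
    (hc : tdist 1 (g * f) < 1 ∨ tdist 1 (h * f) < 1) :
    |auxF (g * f) - auxF (h * f)| ≤ (1 + 18 * (2 + ‖g.trans‖)) * δ := by
  have hfp : 0 < f.scale := f.scale_pos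
  -- bound on ‖f.trans‖
  have hft : ‖f.trans‖ ≤ 3 * (2 + ‖g.trans‖) / g.scale := by
    rcases hc with c1 | c2
    · rw [tdist_one'] at c1
      have h1 : ‖g.scale • f.trans + g.trans‖ < 1 := by
        have := (max_lt_iff.mp c1).2
        simpa using this
      have h2 : g.scale * ‖f.trans‖ ≤ 1 + ‖g.trans‖ := by
        have h4 : ‖g.scale • f.trans‖ ≤ ‖g.scale • f.trans + g.trans‖ + ‖g.trans‖ := by
          have := norm_add_le (g.scale • f.trans + g.trans) (-g.trans)
          simpa using this
        rw [norm_smul, Real.norm_eq_abs, abs_of_pos ha] at h4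
        linarith
      rw [le_div_iff₀ ha]
      nlinarith [norm_nonneg g.trans, norm_nonneg f.trans]
    · rw [tdist_one'] at c2
      have h1 : ‖h.scale • f.trans + h.trans‖ < 1 := by
        have := (max_lt_iff.mp c2).2
        simpa using this
      have hht : ‖h.trans‖ ≤ ‖g.trans‖ + δ := by
        have h5 : ‖h.trans‖ ≤ ‖g.trans‖ + ‖g.trans - h.trans‖ := by
          have h6 := norm_sub_le g.trans (g.trans - h.trans)
          simpa using h6
        linarith
      have h2 : h.scale * ‖f.trans‖ ≤ 1 + ‖h.trans‖ := by
        have h4 : ‖h.scale • f.trans‖ ≤ ‖h.scale • f.trans + h.trans‖ + ‖h.trans‖ := by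
          have := norm_add_le (h.scale • f.trans + h.trans) (-h.trans)
          simpa using this
        rw [norm_smul, Real.norm_eq_abs, abs_of_pos hb] at h4
        linarith
      rw [le_div_iff₀ ha]
      nlinarith [norm_nonneg g.trans, norm_nonneg f.trans]
  -- Lipschitz estimate via the two components
  rw [auxF_mul, auxF_mul]
  refine (aux_lip _ _).trans ?_
  refine (abs_max_sub_max_le_max _ _ _ _).trans ?_
  have d1 : abs (|Real.log (g.scale * f.scale)| - |Real.log (h.scale * f.scale)|) ≤ δ := by
    refine (abs_abs_sub_abs_le_abs_sub _ _).trans ?_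
    have e1 : Real.log (g.scale * f.scale) - Real.log (h.scale * f.scale)
        = Real.log (g.scale / h.scale) := by
      rw [Real.log_mul ha.ne' hfp.ne', Real.log_mul hb.ne' hfp.ne',
        Real.log_div ha.ne' hb.ne']
      ring
    rw [e1]; exact hlog
  have d2 : |‖g.scale • f.trans + g.trans‖ - ‖h.scale • f.trans + h.trans‖|
      ≤ 18 * (2 + ‖g.trans‖) * δ + δ := by
    refine (abs_norm_sub_norm_le _ _).trans ?_
    have e2 : (g.scale • f.trans + g.trans) - (h.scale • f.trans + h.trans)
        = (g.scale - h.scale) • f.trans + (g.trans - h.trans) := by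
      rw [sub_smul]; abel
    rw [e2]
    refine (norm_add_le _ _).trans ?_
    rw [norm_smul, Real.norm_eq_abs]
    have h7 : |g.scale - h.scale| * ‖f.trans‖ ≤ (6 * g.scale * δ) * (3 * (2 + ‖g.trans‖) / g.scale) := by
      exact mul_le_mul habs hft (norm_nonneg _) (by positivity)
    have h8 : (6 * g.scale * δ) * (3 * (2 + ‖g.trans‖) / g.scale) = 18 * (2 + ‖g.trans‖) * δ := by
      field_simp; ring
    rw [h8] at h7
    linarith
  refine (max_le_max d1 d2).trans ?_
  have := norm_nonneg g.trans
  apply max_le <;> nlinarith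

end Homothety

namespace Homothety

variable {n : ℕ}

theorem key (g h f : Homothety n) {δ : ℝ} (hδ1 : δ ≤ 1) (hd : tdist g h ≤ δ) :
    |auxF (g * f) - auxF (h * f)| ≤ (1 + 18 * (2 + ‖g.trans‖)) * δ := by
  have hδ0 : 0 ≤ δ := le_trans (tdist_nonneg' g h) hd
  have ha : 0 < g.scale := g.scale_pos
  have hb : 0 < h.scale := h.scale_pos
  have hfp : 0 < f.scale := f.scale_pos
  have hlog : |Real.log (g.scale / h.scale)| ≤ δ := le_trans (le_max_left _ _) hd
  have htr : ‖g.trans - h.trans‖ ≤ δ := le_trans (le_max_right _ _) hd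
  have hlog1 : |Real.log (g.scale / h.scale)| ≤ 1 := hlog.trans hδ1
  have hexp : Real.exp (Real.log (g.scale / h.scale)) = g.scale / h.scale :=
    Real.exp_log (by positivity)
  have h3 : Real.exp 1 < 3 := by have := Real.exp_one_lt_d9; linarith
  have hql : Real.exp (-1) ≤ g.scale / h.scale := by
    rw [← hexp]
    exact Real.exp_le_exp.mpr (by rcases abs_le.mp hlog1 with ⟨h1, _⟩; linarith)
  have hqu : g.scale / h.scale ≤ Real.exp 1 := by
    rw [← hexp]
    exact Real.exp_le_exp.mpr (by rcases abs_le.mp hlog1 with ⟨_, h2⟩; linarith)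
  have hinv3 : (1 : ℝ) / 3 < Real.exp (-1) := by
    rw [Real.exp_neg, one_div]
    exact inv_strictAnti₀ (Real.exp_pos 1) h3
  have hdiv : g.scale / h.scale * h.scale = g.scale := div_mul_cancel₀ _ hb.ne'
  have hb3 : h.scale ≤ 3 * g.scale := by nlinarith
  have ha3 : g.scale ≤ 3 * h.scale := by nlinarith
  have habs : |g.scale - h.scale| ≤ 6 * g.scale * δ := by
    have h5 := Real.abs_exp_sub_one_le hlog1
    rw [hexp] at h5
    have h6' : g.scale - h.scale = (g.scale / h.scale - 1) * h.scale := by field_simp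
    rw [h6', abs_mul, abs_of_pos hb]
    calc |g.scale / h.scale - 1| * h.scale ≤ (2 * δ) * (3 * g.scale) := by
          apply mul_le_mul _ hb3 hb.le (by positivity)
          exact h5.trans (by linarith)
      _ = 6 * g.scale * δ := by ring
  -- main case split
  by_cases c1 : tdist 1 (g * f) < 1
  case neg =>
    by_cases c2 : tdist 1 (h * f) < 1
    case neg =>
      have e1 : auxF (g * f) = 0 := max_eq_right (by push_neg at c1; linarith)
      have e2 : auxF (h * f) = 0 := max_eq_right (by push_neg at c2; linarith)
      rw [e1, e2, sub_self, abs_zero]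
      have := norm_nonneg g.trans
      nlinarith
    case pos =>
      exact key_core g h f hδ1 hd ha hb hb3 ha3 habs hlog htr hδ0 (Or.inr c2)
  case pos =>
    exact key_core g h f hδ1 hd ha hb hb3 ha3 habs hlog htr hδ0 (Or.inl c1)

end Homothety

open Homothety in
theorem homothety_rdist_rightInvariant_metric_equiv (n : ℕ) :
    (∀ g : Homothety n, rdist g g = 0) ∧
    (∀ g h : Homothety n, 0 ≤ rdist g h) ∧
    (∀ g h : Homothety n, rdist g h = rdist h g) ∧
    (∀ g h : Homothety n, rdist g h = 0 → g = h) ∧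
    (∀ g h k : Homothety n, rdist g k ≤ rdist g h + rdist h k) ∧
    -- right invariance
    (∀ f g h : Homothety n, rdist (f * g) (h * g) = rdist f h) ∧
    -- the identity map `(𝓗, d̃_𝓗) → (𝓗, d_𝓗)` is continuous
    (∀ (g : Homothety n) (ε : ℝ), 0 < ε → ∃ δ : ℝ, 0 < δ ∧
      ∀ h : Homothety n, tdist g h < δ → rdist g h < ε) ∧
    -- the identity map `(𝓗, d_𝓗) → (𝓗, d̃_𝓗)` is continuous
    (∀ (g : Homothety n) (ε : ℝ), 0 < ε → ∃ δ : ℝ, 0 < δ ∧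
      ∀ h : Homothety n, rdist g h < δ → tdist g h < ε) := by
  have nonneg : ∀ g h : Homothety n, 0 ≤ rdist g h := by
    intro g h
    exact le_trans (abs_nonneg _) (le_csSup (bddA g h) (Set.mem_range_self 1))
  have rzero : ∀ g h : Homothety n, rdist g h = 0 → g = h := by
    intro g h h0
    have h1 : |auxF (g * g⁻¹) - auxF (h * g⁻¹)| ≤ 0 := by
      rw [← h0]; exact le_csSup (bddA g h) (Set.mem_range_self g⁻¹)
    rw [mul_inv_cancel, auxF_one'] at h1
    have h2 : auxF (h * g⁻¹) = 1 := by
      have := abs_nonneg (1 - auxF (h * g⁻¹))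
      have h3 : |1 - auxF (h * g⁻¹)| = 0 := le_antisymm h1 this
      have := abs_eq_zero.mp h3
      linarith
    have h4 : tdist 1 (h * g⁻¹) = 0 := by
      rw [auxF] at h2
      have h5 := tdist_nonneg' (1 : Homothety n) (h * g⁻¹)
      rcases max_cases (1 - tdist 1 (h * g⁻¹)) (0:ℝ) with ⟨he, _⟩ | ⟨he, _⟩ <;>
        rw [he] at h2 <;> linarith
    rw [tdist_one'] at h4
    have h6 : |Real.log (h * g⁻¹).scale| = 0 ∧ ‖(h * g⁻¹).trans‖ = 0 := by
      constructor
      · exact le_antisymm (h4 ▸ le_max_left _ _) (abs_nonneg _)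
      · exact le_antisymm (h4 ▸ le_max_right _ _) (norm_nonneg _)
    have h7 : (h * g⁻¹).scale = 1 := by
      have := abs_eq_zero.mp h6.1
      rcases Real.log_eq_zero.mp this with hx | hx | hx
      · exact absurd hx (h * g⁻¹).scale_pos.ne'
      · exact hx
      · nlinarith [(h * g⁻¹).scale_pos]
    have h8 : (h * g⁻¹).trans = 0 := norm_eq_zero.mp h6.2
    have h9 : h * g⁻¹ = 1 := ext' h7 h8
    have := mul_eq_one_iff_eq_inv.mp h9
    rw [this]; simp
  refine ⟨?_, nonneg, ?_, rzero, ?_, ?_, ?_, ?_⟩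
  · -- rdist g g = 0
    intro g
    have h1 : (fun f : Homothety n => |auxF (g * f) - auxF (g * f)|) = fun _ => 0 := by
      funext f; simp
    rw [rdist, h1, Set.range_const, csSup_singleton]
  · -- symmetry
    intro g h
    have h1 : (fun f : Homothety n => |auxF (g * f) - auxF (h * f)|)
        = fun f => |auxF (h * f) - auxF (g * f)| := by
      funext f; exact abs_sub_comm _ _
    rw [rdist, h1, rdist]
  · -- triangle
    intro g h k
    refine csSup_le (Set.range_nonempty _) ?_
    rintro x ⟨f, rfl⟩
    have h1 : |auxF (g * f) - auxF (h * f)| ≤ rdist g h :=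
      le_csSup (bddA g h) (Set.mem_range_self f)
    have h2 : |auxF (h * f) - auxF (k * f)| ≤ rdist h k :=
      le_csSup (bddA h k) (Set.mem_range_self f)
    calc |auxF (g * f) - auxF (k * f)|
        ≤ |auxF (g * f) - auxF (h * f)| + |auxF (h * f) - auxF (k * f)| := abs_sub_le _ _ _
      _ ≤ rdist g h + rdist h k := add_le_add h1 h2
  · -- right invariance
    intro f g h
    rw [rdist, rdist]
    congr 1
    ext x
    constructor
    · rintro ⟨f', rfl⟩
      exact ⟨g * f', by simp only [← mul_assoc]⟩
    · rintro ⟨f', rfl⟩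
      exact ⟨g⁻¹ * f', by simp only [mul_assoc, mul_inv_cancel_left]⟩
  · -- tdist → rdist continuity
    intro g ε hε
    set C : ℝ := 1 + 18 * (2 + ‖g.trans‖) with hC
    have hCpos : 0 < C := by positivity
    refine ⟨min 1 (ε / (2 * C)), lt_min one_pos (by positivity), fun h hh => ?_⟩
    have h1 : tdist g h ≤ min 1 (ε / (2 * C)) := hh.le
    have h2 : rdist g h ≤ C * min 1 (ε / (2 * C)) := by
      refine csSup_le (Set.range_nonempty _) ?_
      rintro x ⟨f, rfl⟩
      exact key g h f (min_le_left _ _) h1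
    have h3 : C * min 1 (ε / (2 * C)) ≤ C * (ε / (2 * C)) :=
      mul_le_mul_of_nonneg_left (min_le_right _ _) hCpos.le
    have h4 : C * (ε / (2 * C)) = ε / 2 := by field_simp
    linarith
  · -- rdist → tdist continuity
    intro g ε hε
    set B : ℝ := 1 + 2 * ‖g.trans‖ with hB
    have hBpos : 0 < B := by positivity
    have hB1 : 1 ≤ B := by nlinarith [norm_nonneg g.trans]
    refine ⟨min (1/2) (ε / (2 * B)), lt_min (by norm_num) (by positivity), fun h hh => ?_⟩
    set δ : ℝ := min (1/2) (ε / (2 * B)) with hδ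
    have hδhalf : δ ≤ 1/2 := min_le_left _ _
    have hδε : δ ≤ ε / (2 * B) := min_le_right _ _
    have hδε2 : δ * B ≤ ε / 2 := by
      calc δ * B ≤ (ε / (2 * B)) * B := mul_le_mul_of_nonneg_right hδε hBpos.le
        _ = ε / 2 := by field_simp
    have hmem : |auxF (g * g⁻¹) - auxF (h * g⁻¹)| ≤ rdist g h :=
      le_csSup (bddA g h) (Set.mem_range_self g⁻¹)
    rw [mul_inv_cancel, auxF_one'] at hmem
    have hk : 1 - δ < auxF (h * g⁻¹) := by
      have := le_abs_self (1 - auxF (h * g⁻¹))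
      linarith [hmem.trans_lt hh]
    have htk : tdist 1 (h * g⁻¹) < δ := by
      rw [auxF] at hk
      rcases max_cases (1 - tdist 1 (h * g⁻¹)) (0:ℝ) with ⟨he, _⟩ | ⟨he, _⟩ <;>
        rw [he] at hk <;> linarith
    rw [tdist_one'] at htk
    obtain ⟨hlogk, htrk⟩ := max_lt_iff.mp htk
    have ha : 0 < g.scale := g.scale_pos
    have hb : 0 < h.scale := h.scale_pos
    have hks : (h * g⁻¹).scale = h.scale / g.scale := by
      simp [div_eq_mul_inv]
    have hkt : (h * g⁻¹).trans = h.trans - (h.scale / g.scale) • g.trans := by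
      simp [smul_smul, div_eq_mul_inv]
      module
    rw [hks] at hlogk
    rw [hkt] at htrk
    -- log component
    have hlog' : |Real.log (g.scale / h.scale)| < δ := by
      have : g.scale / h.scale = (h.scale / g.scale)⁻¹ := by
        rw [inv_div]
      rw [this, Real.log_inv, abs_neg]
      exact hlogk
    -- translation component
    have hqd : |h.scale / g.scale - 1| ≤ 2 * δ := by
      have h5 := Real.abs_exp_sub_one_le (le_of_lt (hlogk.trans_le (by linarith)))
      rw [Real.exp_log (by positivity : (0:ℝ) < h.scale / g.scale)] at h5
      nlinarith [abs_nonneg (Real.log (h.scale / g.scale))]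
    have htr' : ‖g.trans - h.trans‖ < δ * B := by
      have e1 : g.trans - h.trans
          = -((h.trans - (h.scale / g.scale) • g.trans) + ((h.scale / g.scale) • g.trans - g.trans)) := by
        module
      rw [e1, norm_neg]
      have e2 : ‖(h.scale / g.scale) • g.trans - g.trans‖ = |h.scale / g.scale - 1| * ‖g.trans‖ := by
        have e3 : (h.scale / g.scale) • g.trans - g.trans = (h.scale / g.scale - 1) • g.trans := by
          module
        rw [e3, norm_smul, Real.norm_eq_abs]
      calc ‖(h.trans - (h.scale / g.scale) • g.trans) + ((h.scale / g.scale) • g.trans - g.trans)‖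
          ≤ ‖h.trans - (h.scale / g.scale) • g.trans‖ + ‖(h.scale / g.scale) • g.trans - g.trans‖ :=
            norm_add_le _ _
        _ < δ + 2 * δ * ‖g.trans‖ := by
            rw [e2]
            have : |h.scale / g.scale - 1| * ‖g.trans‖ ≤ 2 * δ * ‖g.trans‖ :=
              mul_le_mul_of_nonneg_right hqd (norm_nonneg _)
            linarith
        _ = δ * B := by rw [hB]; ring
    rw [tdist]
    apply max_lt
    · calc |Real.log (g.scale / h.scale)| < δ := hlog'
        _ ≤ ε / (2 * B) := hδε
        _ ≤ ε / 2 := by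
            apply div_le_div_of_nonneg_left hε.le (by norm_num)
            linarith
        _ < ε := by linarith
    · calc ‖g.trans - h.trans‖ < δ * B := htr'
        _ ≤ ε / 2 := hδε2
        _ < ε := by linarith
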